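/- arXiv:2005.02197 — 5 statements merged into one kernel-verified Lean document; each statement's English description precedes it below -/
import Mathlib

section
/- Let (a_i)_{i≥0} be a sequence of nonnegative reals and α > 0. If the sum S := ∑_{k=1}^∞ ∏_{i=0}^{k-1} a_i/(a_i+α) is finite, then ∑_{k=1}^∞ k · (α/(a_k+α)) · ∏_{i=0}^{k-1} a_i/(a_i+α) = S. -/
theorem stmt_1 (a : ℕ → ℝ) (α : ℝ) (ha : ∀ i, 0 ≤ a i) (hα : 0 < α)
    (hS : Summable (fun k : ℕ => ∏ i ∈ Finset.range (k + 1), a i / (a i + α))) :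
    ∑' k : ℕ, ((k : ℝ) + 1) * (α / (a (k + 1) + α)) *
        ∏ i ∈ Finset.range (k + 1), a i / (a i + α) =
      ∑' k : ℕ, ∏ i ∈ Finset.range (k + 1), a i / (a i + α) := by
  set P : ℕ → ℝ := fun k => ∏ i ∈ Finset.range (k + 1), a i / (a i + α) with hP
  set f : ℕ → ℝ := fun k => ((k : ℝ) + 1) * (α / (a (k + 1) + α)) * P k with hf
  have hpos : ∀ i, 0 < a i + α := fun i => add_pos_of_nonneg_of_pos (ha i) hα
  have hrat0 : ∀ i, 0 ≤ a i / (a i + α) := fun i => div_nonneg (ha i) (hpos i).le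
  have hrat1 : ∀ i, a i / (a i + α) ≤ 1 := fun i =>
    div_le_one_of_le₀ (le_add_of_nonneg_right hα.le) (hpos i).le
  have hP0 : ∀ k, 0 ≤ P k := fun k => Finset.prod_nonneg fun i _ => hrat0 i
  have hPsucc : ∀ k, P (k + 1) = P k * (a (k + 1) / (a (k + 1) + α)) := fun k =>
    Finset.prod_range_succ _ _
  have hanti : Antitone P := by
    apply antitone_nat_of_succ_le
    intro n
    rw [hPsucc n]
    calc P n * (a (n + 1) / (a (n + 1) + α)) ≤ P n * 1 :=
          mul_le_mul_of_nonneg_left (hrat1 _) (hP0 n)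
      _ = P n := mul_one _
  have hkey : ∀ k, f k = ((k : ℝ) + 1) * P k - ((k : ℝ) + 1) * P (k + 1) := by
    intro k
    rw [hf, hPsucc k]
    have h := (hpos (k + 1)).ne'
    field_simp
    ring
  have hpart : ∀ n, ∑ k ∈ Finset.range n, f k =
      (∑ k ∈ Finset.range n, P k) - (n : ℝ) * P n := by
    intro n
    induction n with
    | zero => simp
    | succ n ih =>
      rw [Finset.sum_range_succ, ih, hkey n, Finset.sum_range_succ (f := P)]
      push_cast
      ring
  -- n * P n → 0
  have htail : Filter.Tendsto (fun m => ∑' j, P (j + m)) Filter.atTop (nhds 0) :=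
    tendsto_sum_nat_add P
  have hdiv : Filter.Tendsto (fun n : ℕ => n / 2) Filter.atTop Filter.atTop :=
    Filter.tendsto_atTop_atTop.2 fun b => ⟨2 * b, fun n hn => by omega⟩
  have h2tail : Filter.Tendsto (fun n : ℕ => 2 * ∑' j, P (j + n / 2))
      Filter.atTop (nhds 0) := by
    have := (htail.comp hdiv).const_mul (2 : ℝ)
    simpa using this
  have hbound : ∀ n : ℕ, (n : ℝ) * P n ≤ 2 * ∑' j, P (j + n / 2) := by
    intro n
    set m := n / 2 with hm
    have hsum' : Summable fun j => P (j + m) := (summable_nat_add_iff m).2 hS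
    have h1 : ((n - m : ℕ) : ℝ) * P n ≤ ∑ k ∈ Finset.Ico m n, P k := by
      have : ∑ k ∈ Finset.Ico m n, P n ≤ ∑ k ∈ Finset.Ico m n, P k :=
        Finset.sum_le_sum fun k hk => hanti (Finset.mem_Ico.1 hk).2.le
      simpa [Finset.sum_const, Nat.card_Ico, nsmul_eq_mul] using this
    have h2 : ∑ k ∈ Finset.Ico m n, P k ≤ ∑' j, P (j + m) := by
      rw [Finset.sum_Ico_eq_sum_range]
      have : ∑ k ∈ Finset.range (n - m), P (m + k) =
          ∑ k ∈ Finset.range (n - m), P (k + m) := by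
        simp [add_comm]
      rw [this]
      exact Summable.sum_le_tsum _ (fun i _ => hP0 _) hsum'
    have h3 : (n : ℝ) ≤ 2 * ((n - m : ℕ) : ℝ) := by
      have : n ≤ 2 * (n - m) := by omega
      exact_mod_cast this
    calc (n : ℝ) * P n ≤ (2 * ((n - m : ℕ) : ℝ)) * P n :=
          mul_le_mul_of_nonneg_right h3 (hP0 n)
      _ = 2 * (((n - m : ℕ) : ℝ) * P n) := by ring
      _ ≤ 2 * ∑' j, P (j + m) := by linarith [h1.trans h2]
  have hnP : Filter.Tendsto (fun n : ℕ => (n : ℝ) * P n) Filter.atTop (nhds 0) :=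
    tendsto_of_tendsto_of_tendsto_of_le_of_le tendsto_const_nhds h2tail
      (fun n => mul_nonneg (Nat.cast_nonneg n) (hP0 n)) hbound
  -- summability of f
  have hf0 : ∀ k, 0 ≤ f k := fun k =>
    mul_nonneg (mul_nonneg (by positivity) (div_nonneg hα.le (hpos _).le)) (hP0 k)
  have hfsum : Summable f := by
    apply summable_of_sum_range_le hf0
    intro n
    rw [hpart n]
    have h1 : ∑ k ∈ Finset.range n, P k ≤ ∑' k, P k :=
      Summable.sum_le_tsum _ (fun i _ => hP0 _) hS
    have h2 : 0 ≤ (n : ℝ) * P n := mul_nonneg (Nat.cast_nonneg n) (hP0 n)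
    linarith
  have hlim1 : Filter.Tendsto (fun n => ∑ k ∈ Finset.range n, f k)
      Filter.atTop (nhds (∑' k, f k)) := hfsum.hasSum.tendsto_sum_nat
  have hlim2 : Filter.Tendsto (fun n => ∑ k ∈ Finset.range n, f k)
      Filter.atTop (nhds ((∑' k, P k) - 0)) := by
    have := (hS.hasSum.tendsto_sum_nat).sub hnP
    refine this.congr fun n => (hpart n).symm
  have := tendsto_nhds_unique hlim1 hlim2
  simpa using this
end

section
/- Let g > 0, h > 0 and λ > g. Then ∑_{n=1}^∞ ∏_{i=0}^{n-1} (g·i + h)/(g·i + h + λ) = h/(λ - g). Moreover, if 0 < λ ≤ g, the series diverges to ∞. -/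
open Filter Finset Topology

/-- The series `∑ c/(n+d)` with `c,d > 0` is not summable. -/
lemma stmt4_aux_not_summable (c d : ℝ) (hc : 0 < c) (hd : 0 < d) :
    ¬ Summable (fun n : ℕ => c / ((n : ℝ) + d)) := by
  intro hs
  set M : ℝ := max d 1 with hM
  have hM1 : (1:ℝ) ≤ M := le_max_right _ _
  have hMd : d ≤ M := le_max_left _ _
  have hns : ¬ Summable (fun n : ℕ => 1 / ((n : ℝ) + 1)) := by
    intro hsum
    apply Real.not_summable_one_div_natCast
    rw [← summable_nat_add_iff 1]
    convert hsum using 2 with n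
    · rfl
    · norm_num
  apply hns
  have hsum2 := hs.mul_left (M / c)
  apply Summable.of_nonneg_of_le (fun n => by positivity) _ hsum2
  intro n
  have heq : (M / c) * (c / ((n:ℝ) + d)) = M / ((n:ℝ) + d) := by
    field_simp
  rw [heq, div_le_div_iff₀ (by positivity) (by positivity)]
  have h0 : (0:ℝ) ≤ (n:ℝ) := Nat.cast_nonneg n
  nlinarith

theorem stmt_4 (g h l : ℝ) (hg : 0 < g) (hh : 0 < h) (hl : 0 < l) :
    (g < l →
      ∑' n : ℕ, ∏ i ∈ Finset.range (n + 1),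
          (g * i + h) / (g * i + h + l) = h / (l - g)) ∧
    (l ≤ g →
      Filter.Tendsto
        (fun N => ∑ n ∈ Finset.range N, ∏ i ∈ Finset.range (n + 1),
          (g * i + h) / (g * i + h + l))
        Filter.atTop Filter.atTop) := by
  set p : ℕ → ℝ := fun n => ∏ i ∈ range n, (g * i + h) / (g * i + h + l) with hp
  set t : ℕ → ℝ := fun n => p (n + 1) with ht
  have hfac_pos : ∀ i : ℕ, 0 < (g * i + h) / (g * i + h + l) := by
    intro i
    have h1 : 0 < g * i + h := by positivity
    have h2 : 0 < g * i + h + l := by positivity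
    positivity
  have hp_pos : ∀ n, 0 < p n := fun n => prod_pos (fun i _ => hfac_pos i)
  have ht_pos : ∀ n, 0 < t n := fun n => hp_pos (n + 1)
  have hp_succ : ∀ n : ℕ, p (n + 1) = p n * ((g * n + h) / (g * n + h + l)) :=
    fun n => prod_range_succ _ n
  constructor
  · -- convergent case
    intro hgl
    have hlg : (0:ℝ) < l - g := by linarith
    set α : ℕ → ℝ := fun n => p n * (g * n + h) / (l - g) with hα
    have hα_pos : ∀ n, 0 < α n := by
      intro n
      have h1 : 0 < p n := hp_pos n
      have h2 : 0 < g * n + h := by positivity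
      positivity
    have hden : ∀ n : ℕ, (g * n + h + l) ≠ 0 := by
      intro n; have : 0 < g * n + h + l := by positivity
      linarith
    have hα0 : α 0 = h / (l - g) := by
      simp [hα, hp]
    have key : ∀ n : ℕ, α n - α (n + 1) = t n := by
      intro n
      simp only [hα, ht]
      rw [hp_succ n]
      have hd1 := hden n
      push_cast
      field_simp
      ring
    have hsum_eq : ∀ N : ℕ, ∑ n ∈ range N, t n = α 0 - α N := by
      intro N
      rw [← Finset.sum_range_sub' α N]
      exact Finset.sum_congr rfl fun n _ => (key n).symm
    have hsummable : Summable t := by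
      apply summable_of_sum_range_le (fun n => (ht_pos n).le)
      intro N
      rw [hsum_eq N]
      have := (hα_pos N).le
      linarith
    have htendsto : Tendsto (fun N => ∑ n ∈ range N, t n) atTop (𝓝 (∑' n, t n)) :=
      hsummable.hasSum.tendsto_sum_nat
    have hαtendsto : Tendsto α atTop (𝓝 (α 0 - ∑' n, t n)) := by
      have : Tendsto (fun N => α 0 - ∑ n ∈ range N, t n) atTop
          (𝓝 (α 0 - ∑' n, t n)) := tendsto_const_nhds.sub htendsto
      convert this using 1
      funext N
      rw [hsum_eq N]; ring
    set L : ℝ := α 0 - ∑' n, t n with hL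
    have hL_nonneg : 0 ≤ L :=
      ge_of_tendsto' hαtendsto (fun n => (hα_pos n).le)
    have hα_anti : Antitone α := by
      apply antitone_nat_of_succ_le
      intro n
      have := key n
      have := ht_pos n
      linarith
    have hα_ge : ∀ n, L ≤ α n := hα_anti.le_of_tendsto hαtendsto
    have ht_eq : ∀ n : ℕ, t n = α n * (l - g) / (g * n + h + l) := by
      intro n
      simp only [hα, ht]
      rw [hp_succ n]
      have hd1 := hden n
      field_simp
    have hL0 : L = 0 := by
      by_contra hne
      have hLpos : 0 < L := lt_of_le_of_ne hL_nonneg (Ne.symm hne)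
      have hcomp : ∀ n : ℕ, (L * (l - g) / g) / ((n : ℝ) + (h + l) / g) ≤ t n := by
        intro n
        rw [ht_eq n]
        have hd2 : (0:ℝ) < (n : ℝ) + (h + l) / g := by positivity
        have heq : (n : ℝ) + (h + l) / g = (g * n + h + l) / g := by
          field_simp; ring
        have hden2 : (0:ℝ) < g * n + h + l := by positivity
        have e2 : L * (l - g) / g / ((g * n + h + l) / g) =
            L * (l - g) / (g * n + h + l) := by
          field_simp
        rw [heq, e2]
        have := hα_ge n
        gcongr
      have : Summable (fun n : ℕ => (L * (l - g) / g) / ((n : ℝ) + (h + l) / g)) :=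
        Summable.of_nonneg_of_le (fun n => by positivity) hcomp hsummable
      exact stmt4_aux_not_summable _ _ (by positivity) (by positivity) this
    have : ∑' n, t n = α 0 := by
      have : α 0 - ∑' n, t n = 0 := hL0
      linarith
    have hgoal : (∑' n : ℕ, ∏ i ∈ Finset.range (n + 1),
        (g * i + h) / (g * i + h + l)) = ∑' n, t n := rfl
    rw [hgoal, this, hα0]
  · -- divergent case
    intro hlg
    rw [show (fun N => ∑ n ∈ range N, ∏ i ∈ range (n + 1),
        (g * i + h) / (g * i + h + l)) = fun N => ∑ n ∈ range N, t n from rfl]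
    rw [← not_summable_iff_tendsto_nat_atTop_of_nonneg (fun n => (ht_pos n).le)]
    intro hs
    -- compare with h / (g*(n+1) + h) ≥ (h/(g+h)) / (n + ...)
    have hq : ∀ m : ℕ, ∏ i ∈ range m, (g * i + h) / (g * i + h + g) = h / (g * m + h) := by
      intro m
      induction m with
      | zero => simp [hh.ne']
      | succ m ih =>
        rw [prod_range_succ, ih]
        have h1 : (0:ℝ) < g * m + h := by positivity
        have h2 : (0:ℝ) < g * m + h + g := by positivity
        have h3 : (0:ℝ) < g * ((m:ℝ) + 1) + h := by positivity
        rw [div_mul_div_comm]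
        rw [div_eq_div_iff (by positivity) (by push_cast; positivity)]
        push_cast
        ring
    have hle : ∀ n : ℕ, h / (g * (n + 1 : ℕ) + h) ≤ t n := by
      intro n
      rw [ht, hp, ← hq (n + 1)]
      apply Finset.prod_le_prod
      · intro i _
        have h1 : (0:ℝ) < g * i + h := by positivity
        have h2 : (0:ℝ) < g * i + h + g := by positivity
        positivity
      · intro i _
        have h1 : (0:ℝ) < g * i + h := by positivity
        have h2 : (0:ℝ) < g * i + h + l := by positivity
        apply div_le_div_of_nonneg_left h1.le h2 (by linarith)
    have hcomp : ∀ n : ℕ, (h / g) / ((n : ℝ) + (g + h) / g) ≤ t n := by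
      intro n
      refine le_trans ?_ (hle n)
      have heq : (n : ℝ) + (g + h) / g = (g * (n + 1 : ℕ) + h) / g := by
        push_cast; field_simp; ring
      have e2 : h / g / ((g * ((n:ℕ) + 1 : ℕ) + h) / g) = h / (g * ((n:ℕ) + 1 : ℕ) + h) := by
        have h3 : (0:ℝ) < g * ((n:ℕ) + 1 : ℕ) + h := by push_cast; positivity
        field_simp
      rw [heq, e2]
    have : Summable (fun n : ℕ => (h / g) / ((n : ℝ) + (g + h) / g)) :=
      Summable.of_nonneg_of_le (fun n => by positivity) hcomp hs
    exact stmt4_aux_not_summable _ _ (by positivity) (by positivity) this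
end

section
/- Let (a_i)_{i≥0} be nonnegative reals and define m(λ) = ∑_{n=1}^∞ ∏_{i=0}^{n-1} a_i/(a_i+λ) for λ > 0 (allowing the value ∞). Then m is antitone in λ, and if m(λ₀) < ∞ for some λ₀ > 0, then m(λ) → 0 as λ → ∞. Consequently, if additionally m(λ₁) > 1 for some λ₁ ≥ λ₀ with m(λ₁) < ∞ and m is continuous on [λ₁, ∞), there exists α ≥ λ₁ with m(α) = 1. -/
open Filter

theorem stmt_6 (a : ℕ → ℝ) (ha : ∀ i, 0 ≤ a i) (m : ℝ → ENNReal)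
    (hm : ∀ l : ℝ, m l =
      ∑' n : ℕ, ENNReal.ofReal (∏ i ∈ Finset.range (n + 1), a i / (a i + l))) :
    (∀ l₁ l₂ : ℝ, 0 < l₁ → l₁ ≤ l₂ → m l₂ ≤ m l₁) ∧
    (∀ l₀ : ℝ, 0 < l₀ → m l₀ < ⊤ → Tendsto m atTop (nhds 0)) ∧
    (∀ l₀ l₁ : ℝ, 0 < l₀ → l₀ ≤ l₁ → m l₀ < ⊤ → 1 < m l₁ → m l₁ < ⊤ →
      ContinuousOn m (Set.Ici l₁) → ∃ α : ℝ, l₁ ≤ α ∧ m α = 1) := by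
  have hfac : ∀ (i : ℕ) (l₁ l₂ : ℝ), 0 < l₁ → l₁ ≤ l₂ →
      a i / (a i + l₂) ≤ a i / (a i + l₁) := by
    intro i l₁ l₂ h1 h12
    gcongr
    · exact ha i
    · linarith [ha i]
  have hfnn : ∀ (i : ℕ) (l : ℝ), 0 < l → 0 ≤ a i / (a i + l) := by
    intro i l hl
    exact div_nonneg (ha i) (by linarith [ha i])
  have hmono : ∀ l₁ l₂ : ℝ, 0 < l₁ → l₁ ≤ l₂ → m l₂ ≤ m l₁ := by
    intro l₁ l₂ h1 h12
    rw [hm l₁, hm l₂]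
    refine ENNReal.tsum_le_tsum fun n => ENNReal.ofReal_le_ofReal ?_
    exact Finset.prod_le_prod (fun i _ => hfnn i l₂ (lt_of_lt_of_le h1 h12))
      (fun i _ => hfac i l₁ l₂ h1 h12)
  have htend : ∀ l₀ : ℝ, 0 < l₀ → m l₀ < ⊤ → Tendsto m atTop (nhds 0) := by
    intro l₀ hl₀ hfin
    by_cases h0 : a 0 = 0
    · -- every product vanishes for l > 0
      have : ∀ᶠ l in atTop, (0 : ENNReal) = m l := by
        filter_upwards [eventually_gt_atTop 0] with l hl
        rw [hm l]
        have : ∀ n : ℕ, ENNReal.ofReal (∏ i ∈ Finset.range (n + 1), a i / (a i + l)) = 0 := by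
          intro n
          have : (∏ i ∈ Finset.range (n + 1), a i / (a i + l)) = 0 := by
            apply Finset.prod_eq_zero (Finset.mem_range.2 (Nat.succ_pos n))
            rw [h0]; simp
          rw [this, ENNReal.ofReal_zero]
        rw [tsum_congr this, tsum_zero]
      exact Tendsto.congr' this tendsto_const_nhds
    · have h0' : 0 < a 0 := lt_of_le_of_ne (ha 0) (Ne.symm h0)
      set C : ENNReal := ∑' n : ℕ, ENNReal.ofReal
        (∏ i ∈ Finset.range n, a (i + 1) / (a (i + 1) + l₀)) with hC
      -- m l₀ = ofReal (a 0 / (a 0 + l₀)) * C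
      have hsplit : ∀ l : ℝ, 0 < l → ∀ n : ℕ,
          ENNReal.ofReal (∏ i ∈ Finset.range (n + 1), a i / (a i + l)) =
          ENNReal.ofReal (a 0 / (a 0 + l)) *
            ENNReal.ofReal (∏ i ∈ Finset.range n, a (i + 1) / (a (i + 1) + l)) := by
        intro l hl n
        rw [Finset.prod_range_succ', mul_comm, ENNReal.ofReal_mul (hfnn 0 l hl)]
      have hml₀ : m l₀ = ENNReal.ofReal (a 0 / (a 0 + l₀)) * C := by
        rw [hm l₀]
        simp_rw [hsplit l₀ hl₀]
        rw [ENNReal.tsum_mul_left]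
      have hCfin : C < ⊤ := by
        by_contra hc
        push_neg at hc
        have hc' : C = ⊤ := top_le_iff.mp hc
        have hne : ENNReal.ofReal (a 0 / (a 0 + l₀)) ≠ 0 := by
          simp only [ne_eq, ENNReal.ofReal_eq_zero, not_le]
          positivity
        rw [hml₀, hc', ENNReal.mul_top hne] at hfin
        exact absurd hfin (lt_irrefl _)
      -- bound: for l ≥ l₀, m l ≤ ofReal (a 0 / (a 0 + l)) * C
      have hbound : ∀ l : ℝ, l₀ ≤ l → m l ≤ ENNReal.ofReal (a 0 / (a 0 + l)) * C := by
        intro l hl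
        have hlpos : 0 < l := lt_of_lt_of_le hl₀ hl
        rw [hm l]
        calc ∑' n : ℕ, ENNReal.ofReal (∏ i ∈ Finset.range (n + 1), a i / (a i + l))
            ≤ ∑' n : ℕ, ENNReal.ofReal (a 0 / (a 0 + l)) *
              ENNReal.ofReal (∏ i ∈ Finset.range n, a (i + 1) / (a (i + 1) + l₀)) := by
              refine ENNReal.tsum_le_tsum fun n => ?_
              rw [hsplit l hlpos n]
              refine mul_le_mul_right (ENNReal.ofReal_le_ofReal ?_) _
              exact Finset.prod_le_prod (fun i _ => hfnn _ l hlpos)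
                (fun i _ => hfac _ l₀ l hl₀ hl)
          _ = ENNReal.ofReal (a 0 / (a 0 + l)) * C := ENNReal.tsum_mul_left
      -- the bound tends to 0
      have h1 : Tendsto (fun l : ℝ => a 0 / (a 0 + l)) atTop (nhds 0) := by
        apply Tendsto.div_atTop tendsto_const_nhds
        exact tendsto_atTop_add_const_left atTop (a 0) tendsto_id
      have h2 : Tendsto (fun l : ℝ => ENNReal.ofReal (a 0 / (a 0 + l)) * C) atTop (nhds 0) := by
        have := ENNReal.Tendsto.mul_const (ENNReal.tendsto_ofReal h1) (Or.inr hCfin.ne)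
        simpa using this
      refine tendsto_of_tendsto_of_tendsto_of_le_of_le' tendsto_const_nhds h2 ?_ ?_
      · exact Eventually.of_forall fun l => zero_le
      · filter_upwards [eventually_ge_atTop l₀] with l hl using hbound l hl
  refine ⟨hmono, htend, ?_⟩
  intro l₀ l₁ hl₀ hl01 hfin₀ h1lt hfin₁ hcont
  have htd := htend l₀ hl₀ hfin₀
  have hev : ∀ᶠ l in atTop, m l < 1 := by
    have : Set.Iio (1 : ENNReal) ∈ nhds (0 : ENNReal) :=
      IsOpen.mem_nhds isOpen_Iio (by norm_num)
    exact htd this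
  obtain ⟨l₂, hml₂, hl₁₂⟩ := (hev.and (eventually_ge_atTop l₁)).exists
  have hIcc : Set.Icc l₁ l₂ ⊆ Set.Ici l₁ := Set.Icc_subset_Ici_self
  have hivt := intermediate_value_Icc' hl₁₂ (hcont.mono hIcc)
  have h1mem : (1 : ENNReal) ∈ Set.Icc (m l₂) (m l₁) := ⟨le_of_lt hml₂, le_of_lt h1lt⟩
  obtain ⟨α, hα, hmα⟩ := hivt h1mem
  exact ⟨α, hα.1, hmα⟩
end

section
/- Fix η > 0 and C > 0. There exists a constant K and t₀ such that for all t ≥ t₀, all integers a, b with η·t ≤ a ≤ b ≤ t, and all β ∈ [0, C], one has | ∏_{j=a+1}^{b-1} (1 - β/(j-1)) - (a/b)^β | ≤ K/t · (a/b)^β. -/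
private lemma telescope_Ico (f : ℕ → ℝ) {m n : ℕ} (h : m ≤ n) :
    ∑ j ∈ Finset.Ico m n, (f (j + 1) - f j) = f n - f m := by
  rw [Finset.sum_Ico_eq_sub _ h, Finset.sum_range_sub, Finset.sum_range_sub]
  ring

private lemma log_one_sub_bound {x : ℝ} (h0 : 0 ≤ x) (h1 : x ≤ 1 / 2) :
    |Real.log (1 - x) + x| ≤ 2 * x ^ 2 := by
  have hx : |x| < 1 := by rw [abs_of_nonneg h0]; linarith
  have h := Real.abs_log_sub_add_sum_range_le hx 1
  simp only [Finset.sum_range_one, pow_one, Nat.cast_zero, zero_add, div_one] at h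
  rw [abs_of_nonneg h0] at h
  norm_num at h
  have h2 : x ^ 2 / (1 - x) ≤ 2 * x ^ 2 := by
    rw [div_le_iff₀ (by linarith)]
    nlinarith [mul_nonneg (sq_nonneg x) (by linarith : (0:ℝ) ≤ 1 - 2 * x)]
  calc |Real.log (1 - x) + x| = |x + Real.log (1 - x)| := by rw [add_comm]
    _ ≤ x ^ 2 / (1 - x) := h
    _ ≤ 2 * x ^ 2 := h2

private lemma log_one_add_bound {x : ℝ} (h0 : 0 ≤ x) (h1 : x ≤ 1 / 2) :
    |Real.log (1 + x) - x| ≤ 2 * x ^ 2 := by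
  have hx : |(-x)| < 1 := by rw [abs_neg, abs_of_nonneg h0]; linarith
  have h := Real.abs_log_sub_add_sum_range_le hx 1
  simp only [Finset.sum_range_one, pow_one, Nat.cast_zero, zero_add, div_one] at h
  rw [abs_neg, abs_of_nonneg h0] at h
  have hrw : (1 : ℝ) - -x = 1 + x := by ring
  rw [hrw] at h
  norm_num at h
  have h2 : x ^ 2 / (1 - x) ≤ 2 * x ^ 2 := by
    rw [div_le_iff₀ (by linarith)]
    nlinarith [mul_nonneg (sq_nonneg x) (by linarith : (0:ℝ) ≤ 1 - 2 * x)]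
  calc |Real.log (1 + x) - x| = |(-x) + Real.log (1 + x)| := by
        rw [abs_sub_comm, ← abs_neg]; ring_nf
    _ ≤ x ^ 2 / (1 - x) := h
    _ ≤ 2 * x ^ 2 := h2

private lemma g_bound {C β k : ℝ} (hC : 0 < C) (hβ0 : 0 ≤ β) (hβC : β ≤ C)
    (hk4 : 4 ≤ k) (hkC : 2 * C ≤ k) :
    |Real.log (1 - β / k) + β * (Real.log (k + 1) - Real.log k)|
      ≤ 2 * C * (C + 1) * (1 / (k - 1) - 1 / k) := by
  have hkpos : (0 : ℝ) < k := by linarith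
  have hx0 : 0 ≤ β / k := by positivity
  have hx2 : β / k ≤ 1 / 2 := by
    rw [div_le_iff₀ hkpos]; linarith
  have h1 : |Real.log (1 - β / k) + β / k| ≤ 2 * (β / k) ^ 2 := log_one_sub_bound hx0 hx2
  have hlog : Real.log (k + 1) - Real.log k = Real.log (1 + 1 / k) := by
    rw [← Real.log_div (by positivity) (ne_of_gt hkpos)]
    congr 1
    field_simp
  have h2 : |Real.log (1 + 1 / k) - 1 / k| ≤ 2 * (1 / k) ^ 2 := by
    apply log_one_add_bound (by positivity)
    rw [div_le_div_iff₀ hkpos (by norm_num)]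
    linarith
  have key : Real.log (1 - β / k) + β * (Real.log (k + 1) - Real.log k)
      = (Real.log (1 - β / k) + β / k) + β * (Real.log (1 + 1 / k) - 1 / k) := by
    rw [hlog]; ring
  rw [key]
  have hβk : |β * (Real.log (1 + 1 / k) - 1 / k)| ≤ C * (2 * (1 / k) ^ 2) := by
    rw [abs_mul, abs_of_nonneg hβ0]
    exact mul_le_mul hβC h2 (abs_nonneg _) hC.le
  have hsum : |(Real.log (1 - β / k) + β / k) + β * (Real.log (1 + 1 / k) - 1 / k)|
      ≤ 2 * (β / k) ^ 2 + C * (2 * (1 / k) ^ 2) :=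
    le_trans (abs_add_le _ _) (add_le_add h1 hβk)
  refine le_trans hsum ?_
  have hk1 : (0 : ℝ) < k - 1 := by linarith
  have e1 : 2 * (β / k) ^ 2 + C * (2 * (1 / k) ^ 2) = (2 * β ^ 2 + 2 * C) / k ^ 2 := by
    field_simp
  have e2 : 2 * C * (C + 1) * (1 / (k - 1) - 1 / k) = (2 * C ^ 2 + 2 * C) / ((k - 1) * k) := by
    field_simp
    ring
  rw [e1, e2, div_le_div_iff₀ (by positivity) (by positivity)]
  nlinarith [mul_nonneg (mul_nonneg (sub_nonneg.mpr hβC) (by linarith : (0:ℝ) ≤ C + β))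
    (by positivity : (0:ℝ) ≤ (k - 1) * k), sq_nonneg β, mul_pos hk1 hkpos,
    mul_nonneg (by nlinarith : (0:ℝ) ≤ 2 * β ^ 2 + 2 * C) hkpos.le]

private lemma final_arith {E C η t : ℝ} (hE : 0 < E) (hC : 0 < C) (hη : 0 < η) (ht : 0 < t) :
    E * (2 / (η * t)) + C * (2 / (η * t)) ≤ ((4 * E + 4 * C) / η) / t := by
  have h1 : E * (2 / (η * t)) + C * (2 / (η * t)) = (2 * E + 2 * C) / (η * t) := by
    field_simp
  have h2 : (4 * E + 4 * C) / η / t = (4 * E + 4 * C) / (η * t) := by rw [div_div]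
  rw [h1, h2, div_le_div_iff₀ (by positivity) (by positivity)]
  nlinarith [mul_pos hη ht]

set_option maxHeartbeats 2000000 in
/-- Uniform Stirling-type estimate: for `ηt ≤ a ≤ b ≤ t` and `β ∈ [0, C]`,
`∏_{j=a+1}^{b-1} (1 - β/(j-1))` equals `(a/b)^β` up to a relative error `O(1/t)`. -/
theorem stmt_15 (η C : ℝ) (hη : 0 < η) (hC : 0 < C) :
    ∃ (K : ℝ) (t₀ : ℕ), ∀ t : ℕ, t₀ ≤ t → ∀ a b : ℕ,
      η * t ≤ (a : ℝ) → a ≤ b → b ≤ t → ∀ β : ℝ, β ∈ Set.Icc 0 C →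
        |(∏ j ∈ Finset.Ico (a + 1) b, (1 - β / ((j : ℝ) - 1))) -
            ((a : ℝ) / b) ^ β| ≤
          K / t * ((a : ℝ) / b) ^ β := by
  set E : ℝ := 2 * C * (C + 1) with hE
  set K₁ : ℝ := (4 * E + 4 * C) / η with hK₁
  have hEpos : 0 < E := by positivity
  have hK₁pos : 0 < K₁ := by positivity
  set M : ℝ := max (max (4 / η) (4 * C / η)) K₁ with hM
  clear_value E K₁ M
  refine ⟨2 * K₁, ⌈M⌉₊ + 1, ?_⟩
  intro t ht a b ha hab hbt β hβ
  obtain ⟨hβ0, hβC⟩ := hβ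
  have hMt : M ≤ (t : ℝ) := by
    calc M ≤ (⌈M⌉₊ : ℝ) := Nat.le_ceil M
      _ ≤ (t : ℝ) := by exact_mod_cast le_trans (Nat.le_succ _) ht
  rw [hM] at hMt
  have htη4 : 4 ≤ η * t := by
    have h : 4 / η ≤ (t : ℝ) := le_trans (le_trans (le_max_left _ _) (le_max_left _ _)) hMt
    calc (4 : ℝ) = η * (4 / η) := by field_simp
      _ ≤ η * t := mul_le_mul_of_nonneg_left h hη.le
  have htC4 : 4 * C ≤ η * t := by
    have h : 4 * C / η ≤ (t : ℝ) := le_trans (le_trans (le_max_right _ _) (le_max_left _ _)) hMt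
    calc (4 : ℝ) * C = η * (4 * C / η) := by field_simp
      _ ≤ η * t := mul_le_mul_of_nonneg_left h hη.le
  have htK₁ : K₁ ≤ (t : ℝ) := le_trans (le_max_right _ _) hMt
  have htpos : (0 : ℝ) < t := by nlinarith
  have hηt : (0 : ℝ) < η * t := by positivity
  have ha4 : (4 : ℝ) ≤ (a : ℝ) := le_trans htη4 ha
  have hapos : (0 : ℝ) < a := by linarith
  have hbR : (a : ℝ) ≤ b := by exact_mod_cast hab
  have hbpos : (0 : ℝ) < b := lt_of_lt_of_le hapos hbR
  have hQpos : (0 : ℝ) < ((a : ℝ) / b) ^ β := Real.rpow_pos_of_pos (by positivity) β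
  rcases eq_or_lt_of_le hab with heq | hlt
  · subst heq
    rw [Finset.Ico_eq_empty (by omega), Finset.prod_empty, div_self (ne_of_gt hapos),
      Real.one_rpow]
    simp only [sub_self, abs_zero]
    positivity
  have hab1 : a + 1 ≤ b := hlt
  set Q : ℝ := ((a : ℝ) / b) ^ β with hQ
  clear_value Q
  have hfac : ∀ j ∈ Finset.Ico (a + 1) b, (0 : ℝ) < ((j : ℝ) - 1)
      ∧ (a : ℝ) ≤ (j : ℝ) - 1 ∧ β / ((j : ℝ) - 1) ≤ 1 / 2 ∧ 0 ≤ β / ((j : ℝ) - 1) := by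
    intro j hj
    rw [Finset.mem_Ico] at hj
    have hja : (a : ℝ) + 1 ≤ j := by exact_mod_cast hj.1
    have hk : (a : ℝ) ≤ (j : ℝ) - 1 := by linarith
    have hkpos : (0 : ℝ) < (j : ℝ) - 1 := by linarith
    refine ⟨hkpos, hk, ?_, by positivity⟩
    rw [div_le_iff₀ hkpos]
    nlinarith
  have hfacpos : ∀ j ∈ Finset.Ico (a + 1) b, (0 : ℝ) < 1 - β / ((j : ℝ) - 1) := by
    intro j hj
    obtain ⟨_, _, h2, _⟩ := hfac j hj
    linarith
  set P : ℝ := ∏ j ∈ Finset.Ico (a + 1) b, (1 - β / ((j : ℝ) - 1)) with hP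
  have hPpos : 0 < P := Finset.prod_pos hfacpos
  clear_value P
  set S : ℝ := Real.log P - Real.log Q with hS
  clear_value S
  have hPQ : P = Q * Real.exp S := by
    rw [hS, Real.exp_sub, Real.exp_log hPpos, Real.exp_log hQpos]
    field_simp
  have hlogQ : Real.log Q = β * (Real.log a - Real.log b) := by
    rw [hQ, Real.log_rpow (by positivity), Real.log_div (ne_of_gt hapos) (ne_of_gt hbpos)]
  have hlogP : Real.log P = ∑ j ∈ Finset.Ico (a + 1) b, Real.log (1 - β / ((j : ℝ) - 1)) := by
    rw [hP]
    exact Real.log_prod (fun j hj => ne_of_gt (hfacpos j hj))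
  have htel : ∑ j ∈ Finset.Ico (a + 1) b,
      (β * (Real.log ((j : ℝ)) - Real.log ((j : ℝ) - 1)))
      = β * Real.log ((b : ℝ) - 1) - β * Real.log a := by
    have h := telescope_Ico (fun j => β * Real.log ((j : ℝ) - 1)) hab1
    have hterm : ∀ j : ℕ, β * Real.log (((j + 1 : ℕ) : ℝ) - 1) - β * Real.log ((j : ℝ) - 1)
        = β * (Real.log ((j : ℝ)) - Real.log ((j : ℝ) - 1)) := by
      intro j
      push_cast
      ring_nf
    rw [Finset.sum_congr rfl (fun j _ => hterm j)] at h
    rw [h]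
    push_cast
    ring_nf
  have hgbound : ∀ j ∈ Finset.Ico (a + 1) b,
      |Real.log (1 - β / ((j : ℝ) - 1)) + β * (Real.log ((j : ℝ)) - Real.log ((j : ℝ) - 1))|
        ≤ E * (1 / ((j : ℝ) - 2) - 1 / ((j : ℝ) - 1)) := by
    intro j hj
    obtain ⟨hkpos, hka, _, _⟩ := hfac j hj
    have hk4 : (4 : ℝ) ≤ (j : ℝ) - 1 := le_trans ha4 hka
    have hkC : 2 * C ≤ (j : ℝ) - 1 := by
      have : 4 * C ≤ (j : ℝ) - 1 := le_trans (le_trans htC4 ha) hka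
      linarith
    have h := g_bound hC hβ0 hβC hk4 hkC
    have e1 : ((j : ℝ) - 1) + 1 = (j : ℝ) := by ring
    have e2 : ((j : ℝ) - 1) - 1 = (j : ℝ) - 2 := by ring
    rw [e1, e2] at h
    rw [hE]
    exact h
  have htel2 : ∑ j ∈ Finset.Ico (a + 1) b, (1 / ((j : ℝ) - 2) - 1 / ((j : ℝ) - 1))
      = 1 / ((a : ℝ) - 1) - 1 / ((b : ℝ) - 2) := by
    have h := telescope_Ico (fun j => -(1 / ((j : ℝ) - 2))) hab1
    have hterm : ∀ j : ℕ, -(1 / (((j + 1 : ℕ) : ℝ) - 2)) - -(1 / ((j : ℝ) - 2))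
        = 1 / ((j : ℝ) - 2) - 1 / ((j : ℝ) - 1) := by
      intro j
      push_cast
      ring_nf
    rw [Finset.sum_congr rfl (fun j _ => hterm j)] at h
    rw [h]
    push_cast
    ring_nf
  have hSeq : S = (∑ j ∈ Finset.Ico (a + 1) b,
      (Real.log (1 - β / ((j : ℝ) - 1)) + β * (Real.log ((j : ℝ)) - Real.log ((j : ℝ) - 1))))
      + β * (Real.log b - Real.log ((b : ℝ) - 1)) := by
    rw [hS, hlogP, hlogQ, Finset.sum_add_distrib, htel]
    ring
  have hb1pos : (0 : ℝ) < (b : ℝ) - 1 := by linarith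
  have hbdry0 : 0 ≤ Real.log b - Real.log ((b : ℝ) - 1) :=
    sub_nonneg.mpr (Real.log_le_log hb1pos (by linarith))
  have hbdry : Real.log b - Real.log ((b : ℝ) - 1) ≤ 1 / ((b : ℝ) - 1) := by
    rw [← Real.log_div (ne_of_gt hbpos) (ne_of_gt hb1pos)]
    have h := Real.log_le_sub_one_of_pos (x := (b : ℝ) / ((b : ℝ) - 1)) (by positivity)
    have heq3 : (b : ℝ) / ((b : ℝ) - 1) - 1 = 1 / ((b : ℝ) - 1) := by
      field_simp
      ring
    linarith [heq3 ▸ h]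
  have hSbound : |S| ≤ K₁ / t := by
    rw [hSeq]
    have hs1 : |∑ j ∈ Finset.Ico (a + 1) b,
        (Real.log (1 - β / ((j : ℝ) - 1)) + β * (Real.log ((j : ℝ)) - Real.log ((j : ℝ) - 1)))|
        ≤ E * (1 / ((a : ℝ) - 1) - 1 / ((b : ℝ) - 2)) := by
      calc _ ≤ ∑ j ∈ Finset.Ico (a + 1) b,
            |Real.log (1 - β / ((j : ℝ) - 1)) + β * (Real.log ((j : ℝ)) - Real.log ((j : ℝ) - 1))| :=
          Finset.abs_sum_le_sum_abs _ _
        _ ≤ ∑ j ∈ Finset.Ico (a + 1) b, E * (1 / ((j : ℝ) - 2) - 1 / ((j : ℝ) - 1)) :=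
          Finset.sum_le_sum hgbound
        _ = E * (1 / ((a : ℝ) - 1) - 1 / ((b : ℝ) - 2)) := by
          rw [← Finset.mul_sum, htel2]
    have hs2 : |β * (Real.log b - Real.log ((b : ℝ) - 1))| ≤ C * (1 / ((b : ℝ) - 1)) := by
      rw [abs_mul, abs_of_nonneg hβ0, abs_of_nonneg hbdry0]
      exact mul_le_mul hβC hbdry hbdry0 hC.le
    have ha1 : 1 / ((a : ℝ) - 1) ≤ 2 / (η * t) := by
      rw [div_le_div_iff₀ (by linarith) hηt]
      nlinarith
    have hb2 : 1 / ((b : ℝ) - 1) ≤ 2 / (η * t) := by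
      rw [div_le_div_iff₀ hb1pos hηt]
      have h : η * t ≤ (b : ℝ) := le_trans ha hbR
      nlinarith
    have hb2pos : (0 : ℝ) ≤ 1 / ((b : ℝ) - 2) := by
      apply div_nonneg one_pos.le
      linarith
    have hfinal : E * (1 / ((a : ℝ) - 1) - 1 / ((b : ℝ) - 2)) + C * (1 / ((b : ℝ) - 1))
        ≤ K₁ / t := by
      have h1 : E * (1 / ((a : ℝ) - 1) - 1 / ((b : ℝ) - 2)) ≤ E * (2 / (η * t)) := by
        apply mul_le_mul_of_nonneg_left _ hEpos.le
        linarith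
      have h2 : C * (1 / ((b : ℝ) - 1)) ≤ C * (2 / (η * t)) :=
        mul_le_mul_of_nonneg_left hb2 hC.le
      have h3 : E * (2 / (η * t)) + C * (2 / (η * t)) ≤ K₁ / t := by
        rw [hK₁]
        exact final_arith hEpos hC hη htpos
      linarith
    calc _ ≤ _ := abs_add_le _ _
      _ ≤ E * (1 / ((a : ℝ) - 1) - 1 / ((b : ℝ) - 2)) + C * (1 / ((b : ℝ) - 1)) :=
        add_le_add hs1 hs2
      _ ≤ K₁ / t := hfinal
  have hS1 : |S| ≤ 1 := by
    refine le_trans hSbound ?_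
    rw [div_le_one htpos]
    exact htK₁
  have hexp : |Real.exp S - 1| ≤ 2 * |S| := Real.abs_exp_sub_one_le hS1
  calc |P - Q| = Q * |Real.exp S - 1| := by
        have e : Q * Real.exp S - Q = Q * (Real.exp S - 1) := by ring
        rw [hPQ, e, abs_mul, abs_of_pos hQpos]
    _ ≤ Q * (2 * (K₁ / t)) := by
        apply mul_le_mul_of_nonneg_left _ hQpos.le
        calc |Real.exp S - 1| ≤ 2 * |S| := hexp
          _ ≤ 2 * (K₁ / t) := by linarith
    _ = 2 * K₁ / t * Q := by ring
end

section
/- Let k ≥ 0 and e_0, …, e_k ≥ 0 be fixed reals. Define for n ≥ k+2 the sum S_n = (1/n) · ∑ over integer tuples 1 ≤ i_0 < i_1 < ⋯ < i_k ≤ n of ∏_{s=0}^{k-1} [ (i_s/i_{s+1})^{e_s} · 1/(i_{s+1} - 1) ] · (i_k/n)^{e_k}. Then S_n → ∏_{s=0}^{k} 1/(e_s + 1) as n → ∞. -/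
open scoped Classical

open Filter Finset

lemma riemann_rpow (e : ℝ) (he : 0 ≤ e) :
    Tendsto (fun n : ℕ => (1/(n:ℝ)) * ∑ i ∈ Finset.Icc 1 n, ((i:ℝ)/(n:ℝ))^e)
      atTop (nhds (1/(e+1))) := by
  have he1 : (0:ℝ) < e + 1 := by linarith
  have key : ∀ n : ℕ, 1 ≤ n →
      1/(e+1) ≤ (1/(n:ℝ)) * ∑ i ∈ Finset.Icc 1 n, ((i:ℝ)/(n:ℝ))^e ∧
      (1/(n:ℝ)) * ∑ i ∈ Finset.Icc 1 n, ((i:ℝ)/(n:ℝ))^e ≤ 1/(e+1) + 1/(n:ℝ) := by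
    intro n hn
    have hN : (0:ℝ) < (n:ℝ) := by exact_mod_cast hn
    have hint : ∀ i : ℕ, IntervalIntegrable (fun x : ℝ => x ^ e) MeasureTheory.volume
        ((i:ℝ)/(n:ℝ)) (((i+1:ℕ):ℝ)/(n:ℝ)) := fun i =>
      intervalIntegral.intervalIntegrable_rpow' (by linarith)
    have hsum : ∑ i ∈ Finset.range n,
        ∫ x in ((i:ℝ)/(n:ℝ))..(((i+1:ℕ):ℝ)/(n:ℝ)), x ^ e = 1/(e+1) := by
      rw [intervalIntegral.sum_integral_adjacent_intervals (fun i _ => hint i)]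
      simp only [Nat.cast_zero, zero_div, div_self hN.ne']
      rw [integral_rpow (Or.inl (by linarith))]
      rw [Real.one_rpow, Real.zero_rpow he1.ne']
      ring
    have hab : ∀ i : ℕ, (i:ℝ)/(n:ℝ) ≤ ((i+1:ℕ):ℝ)/(n:ℝ) := by
      intro i; push_cast; gcongr <;> linarith
    have h0 : ∀ i : ℕ, (0:ℝ) ≤ (i:ℝ)/(n:ℝ) := fun i => by positivity
    have hlow : ∀ i : ℕ, (1/(n:ℝ)) * ((i:ℝ)/(n:ℝ))^e ≤
        ∫ x in ((i:ℝ)/(n:ℝ))..(((i+1:ℕ):ℝ)/(n:ℝ)), x ^ e := by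
      intro i
      have := intervalIntegral.integral_mono_on (hab i)
        (intervalIntegrable_const (c := ((i:ℝ)/(n:ℝ))^e)) (hint i)
        (fun x hx => Real.rpow_le_rpow (h0 i) hx.1 he)
      rw [intervalIntegral.integral_const, smul_eq_mul] at this
      calc (1/(n:ℝ)) * ((i:ℝ)/(n:ℝ))^e
          = (((i+1:ℕ):ℝ)/(n:ℝ) - (i:ℝ)/(n:ℝ)) * ((i:ℝ)/(n:ℝ))^e := by
            push_cast; field_simp; ring
        _ ≤ _ := this
    have hup : ∀ i : ℕ, (∫ x in ((i:ℝ)/(n:ℝ))..(((i+1:ℕ):ℝ)/(n:ℝ)), x ^ e) ≤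
        (1/(n:ℝ)) * (((i+1:ℕ):ℝ)/(n:ℝ))^e := by
      intro i
      have := intervalIntegral.integral_mono_on (hab i)
        (hint i) (intervalIntegrable_const (c := (((i+1:ℕ):ℝ)/(n:ℝ))^e))
        (fun x hx => Real.rpow_le_rpow (le_trans (h0 i) hx.1) hx.2 he)
      rw [intervalIntegral.integral_const, smul_eq_mul] at this
      calc (∫ x in ((i:ℝ)/(n:ℝ))..(((i+1:ℕ):ℝ)/(n:ℝ)), x ^ e) ≤ _ := this
        _ = (1/(n:ℝ)) * (((i+1:ℕ):ℝ)/(n:ℝ))^e := by push_cast; field_simp; ring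
    have hshift : ∑ i ∈ Finset.Icc 1 n, ((i:ℝ)/(n:ℝ))^e
        = ∑ i ∈ Finset.range n, (((i+1:ℕ):ℝ)/(n:ℝ))^e := by
      rw [← Finset.Ico_add_one_right_eq_Icc, Finset.sum_Ico_eq_sum_range]
      simp only [Nat.add_sub_cancel, Nat.succ_sub_one]
      exact Finset.sum_congr rfl (fun i _ => by push_cast; ring_nf)
    constructor
    · rw [← hsum, hshift, Finset.mul_sum]
      apply Finset.sum_le_sum
      intro i _
      exact hup i
    · have htel : ∑ i ∈ Finset.range n, ((((i+1:ℕ)):ℝ)/(n:ℝ))^e - ∑ i ∈ Finset.range n, ((i:ℝ)/(n:ℝ))^e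
          = (((n:ℕ):ℝ)/(n:ℝ))^e - (((0:ℕ):ℝ)/(n:ℝ))^e := by
        rw [← Finset.sum_sub_distrib]
        exact Finset.sum_range_sub (fun j => ((j:ℝ)/(n:ℝ))^e) n
      have hsb : ∑ i ∈ Finset.range n, (((i+1:ℕ):ℝ)/(n:ℝ))^e ≤ (n:ℝ)/(e+1) + 1 := by
        have h2 : ∑ i ∈ Finset.range n, ((i:ℝ)/(n:ℝ))^e ≤ (n:ℝ)/(e+1) := by
          calc ∑ i ∈ Finset.range n, ((i:ℝ)/(n:ℝ))^e
              = (n:ℝ) * ∑ i ∈ Finset.range n, (1/(n:ℝ)) * ((i:ℝ)/(n:ℝ))^e := by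
                rw [Finset.mul_sum]; exact Finset.sum_congr rfl (fun i _ => by field_simp)
            _ ≤ (n:ℝ) * ∑ i ∈ Finset.range n, ∫ x in ((i:ℝ)/(n:ℝ))..(((i+1:ℕ):ℝ)/(n:ℝ)), x ^ e :=
                mul_le_mul_of_nonneg_left (Finset.sum_le_sum (fun i _ => hlow i)) hN.le
            _ = (n:ℝ) * (1/(e+1)) := by rw [hsum]
            _ = (n:ℝ)/(e+1) := by ring
        have h3 : (((n:ℕ):ℝ)/(n:ℝ))^e = 1 := by rw [div_self hN.ne', Real.one_rpow]
        have h4 : (0:ℝ) ≤ (((0:ℕ):ℝ)/(n:ℝ))^e := Real.rpow_nonneg (h0 0) e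
        nlinarith [htel]
      rw [hshift]
      calc (1/(n:ℝ)) * ∑ i ∈ Finset.range n, (((i+1:ℕ):ℝ)/(n:ℝ))^e
          ≤ (1/(n:ℝ)) * ((n:ℝ)/(e+1) + 1) := by
            apply mul_le_mul_of_nonneg_left hsb (by positivity)
        _ = 1/(e+1) + 1/(n:ℝ) := by field_simp
  refine tendsto_of_tendsto_of_tendsto_of_le_of_le' (g := fun _ : ℕ => 1/(e+1))
    (h := fun n : ℕ => 1/(e+1) + 1/(n:ℝ)) tendsto_const_nhds ?_ ?_ ?_
  · have : Tendsto (fun n : ℕ => 1/(n:ℝ)) atTop (nhds 0) := tendsto_one_div_atTop_nhds_zero_nat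
    simpa using tendsto_const_nhds.add this
  · filter_upwards [eventually_ge_atTop 1] with n hn
    exact (key n hn).1
  · filter_upwards [eventually_ge_atTop 1] with n hn
    exact (key n hn).2

lemma weightedL (a : ℕ → ℝ) (c : ℝ) (ha : Tendsto a atTop (nhds c)) (e : ℝ) (he : 0 ≤ e) :
    Tendsto (fun n : ℕ => (1/(n:ℝ)) * ∑ i ∈ Finset.Icc 1 n, a i * ((i:ℝ)/(n:ℝ))^e)
      atTop (nhds (c/(e+1))) := by
  set f : ℕ → ℝ := fun n => (1/(n:ℝ)) * ∑ i ∈ Finset.Icc 1 n, a i * ((i:ℝ)/(n:ℝ))^e with hf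
  set R : ℕ → ℝ := fun n => (1/(n:ℝ)) * ∑ i ∈ Finset.Icc 1 n, ((i:ℝ)/(n:ℝ))^e with hR
  -- Cesàro: averages of |a i - c| over range (n+1), normalized by n, tend to 0
  have habs : Tendsto (fun i : ℕ => |a i - c|) atTop (nhds 0) := by
    have := (ha.sub_const c).abs
    simpa using this
  have hces : Tendsto (fun n : ℕ => ((n:ℝ))⁻¹ * ∑ i ∈ Finset.range n, |a i - c|)
      atTop (nhds 0) := by simpa using habs.cesaro
  have hces' : Tendsto (fun n : ℕ => (1/(n:ℝ)) * ∑ i ∈ Finset.range (n+1), |a i - c|)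
      atTop (nhds 0) := by
    have heq : (fun n : ℕ => (1/(n:ℝ)) * ∑ i ∈ Finset.range (n+1), |a i - c|)
        = fun n : ℕ => (1/(n:ℝ)) * ∑ i ∈ Finset.range n, |a i - c| + (1/(n:ℝ)) * |a n - c| := by
      funext n; rw [Finset.sum_range_succ, mul_add]
    rw [heq]
    have t1 : Tendsto (fun n : ℕ => (1/(n:ℝ)) * ∑ i ∈ Finset.range n, |a i - c|)
        atTop (nhds 0) := by simpa [one_div] using hces
    have t2 : Tendsto (fun n : ℕ => (1/(n:ℝ)) * |a n - c|) atTop (nhds 0) := by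
      simpa using tendsto_one_div_atTop_nhds_zero_nat.mul habs
    simpa using t1.add t2
  have hdiff : Tendsto (fun n : ℕ => f n - c * R n) atTop (nhds 0) := by
    apply squeeze_zero_norm' (a := fun n : ℕ => (1/(n:ℝ)) * ∑ i ∈ Finset.range (n+1), |a i - c|)
      ?_ hces'
    filter_upwards [eventually_ge_atTop 1] with n hn
    have hN : (0:ℝ) < (n:ℝ) := by exact_mod_cast hn
    have heq : f n - c * R n = (1/(n:ℝ)) * ∑ i ∈ Finset.Icc 1 n, (a i - c) * ((i:ℝ)/(n:ℝ))^e := by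
      simp only [hf, hR]
      rw [← mul_assoc, mul_comm c (1/(n:ℝ)), mul_assoc, ← mul_sub]
      congr 1
      rw [Finset.mul_sum, ← Finset.sum_sub_distrib]
      exact Finset.sum_congr rfl (fun i _ => by ring)
    rw [heq]
    have hb1 : |(1/(n:ℝ)) * ∑ i ∈ Finset.Icc 1 n, (a i - c) * ((i:ℝ)/(n:ℝ))^e|
        ≤ (1/(n:ℝ)) * ∑ i ∈ Finset.Icc 1 n, |a i - c| := by
      rw [abs_mul, abs_of_nonneg (by positivity : (0:ℝ) ≤ 1/(n:ℝ))]
      apply mul_le_mul_of_nonneg_left ?_ (by positivity)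
      refine (Finset.abs_sum_le_sum_abs _ _).trans (Finset.sum_le_sum fun i hi => ?_)
      rw [abs_mul]
      have hi' : (i:ℝ)/(n:ℝ) ≤ 1 := by
        rw [div_le_one hN]; exact_mod_cast (Finset.mem_Icc.mp hi).2
      have h1 : |((i:ℝ)/(n:ℝ))^e| ≤ 1 := by
        rw [abs_of_nonneg (Real.rpow_nonneg (by positivity) e)]
        exact Real.rpow_le_one (by positivity) hi' he
      calc |a i - c| * |((i:ℝ)/(n:ℝ))^e| ≤ |a i - c| * 1 :=
            mul_le_mul_of_nonneg_left h1 (abs_nonneg _)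
        _ = |a i - c| := mul_one _
    refine hb1.trans ?_
    apply mul_le_mul_of_nonneg_left ?_ (by positivity)
    apply Finset.sum_le_sum_of_subset_of_nonneg ?_ (fun i _ _ => abs_nonneg _)
    intro i hi
    rw [Finset.mem_range]
    exact Nat.lt_succ_of_le (Finset.mem_Icc.mp hi).2
  have hRt := riemann_rpow e he
  have := hdiff.add (tendsto_const_nhds (x := c) |>.mul hRt)
  have hfeq : (fun n : ℕ => f n - c * R n + c * R n) = f := by funext n; ring
  rw [hfeq] at this
  convert this using 1
  rw [zero_add]; ring

lemma weightedL' (a : ℕ → ℝ) (c : ℝ) (ha : Tendsto a atTop (nhds c)) (e : ℝ) (he : 0 ≤ e) :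
    Tendsto (fun m : ℕ => (1/((m:ℝ)-1)) * ∑ i ∈ Finset.Icc 1 (m-1), a i * ((i:ℝ)/(m:ℝ))^e)
      atTop (nhds (c/(e+1))) := by
  have h1 : Tendsto (fun m : ℕ => (1/(((m-1:ℕ)):ℝ)) * ∑ i ∈ Finset.Icc 1 (m-1),
      a i * ((i:ℝ)/((m-1:ℕ):ℝ))^e) atTop (nhds (c/(e+1))) :=
    (weightedL a c ha e he).comp (tendsto_sub_atTop_nat 1)
  have h2 : Tendsto (fun m : ℕ => (((m-1:ℕ):ℝ)/(m:ℝ))^e) atTop (nhds 1) := by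
    have hq : Tendsto (fun m : ℕ => ((m-1:ℕ):ℝ)/(m:ℝ)) atTop (nhds 1) := by
      have heq : ∀ᶠ m : ℕ in atTop, ((m-1:ℕ):ℝ)/(m:ℝ) = 1 - 1/(m:ℝ) := by
        filter_upwards [eventually_ge_atTop 1] with m hm
        have hm' : (1:ℝ) ≤ (m:ℝ) := by exact_mod_cast hm
        rw [Nat.cast_sub hm]
        field_simp
        simp
      rw [tendsto_congr' heq]
      have := tendsto_const_nhds (x := (1:ℝ)) (f := atTop (α := ℕ)) |>.sub
        tendsto_one_div_atTop_nhds_zero_nat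
      simpa using this
    have := hq.rpow_const (p := e) (Or.inl one_ne_zero)
    simpa using this
  have h3 := h2.mul h1
  rw [one_mul] at h3
  apply h3.congr'
  filter_upwards [eventually_ge_atTop 2] with m hm
  have hm1 : (1:ℝ) ≤ (m:ℝ) - 1 := by
    have : (2:ℝ) ≤ (m:ℝ) := by exact_mod_cast hm
    linarith
  have hmpos : (0:ℝ) < (m:ℝ) := by
    have : (2:ℝ) ≤ (m:ℝ) := by exact_mod_cast hm
    linarith
  have hm' : 1 ≤ m := le_trans (by norm_num) hm
  rw [Nat.cast_sub hm', Nat.cast_one]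
  rw [mul_left_comm]
  congr 1
  rw [Finset.mul_sum]
  refine Finset.sum_congr rfl fun i hi => ?_
  have hkey : (((m:ℝ)-1)/(m:ℝ))^e * ((i:ℝ)/((m:ℝ)-1))^e = ((i:ℝ)/(m:ℝ))^e := by
    rw [← Real.mul_rpow (by positivity) (by positivity)]
    congr 1
    field_simp
  rw [mul_left_comm, hkey]

lemma fin_sum_ite (n m : ℕ) (hm : m ≤ n+1) (g : ℕ → ℝ) :
    ∑ x : Fin (n+1), (if 1 ≤ (x:ℕ) ∧ (x:ℕ) < m then g (x:ℕ) else 0)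
      = ∑ j ∈ Finset.Icc 1 (m-1), g j := by
  rw [Fin.sum_univ_eq_sum_range (fun j => if 1 ≤ j ∧ j < m then g j else 0) (n+1)]
  have h1 : ∀ j, (if 1 ≤ j ∧ j < m then g j else 0)
      = (if j ∈ Finset.Icc 1 (m-1) then g j else 0) := by
    intro j
    congr 1
    simp only [Finset.mem_Icc, eq_iff_iff]
    omega
  simp_rw [h1]
  rw [Finset.sum_ite_mem]
  congr 1
  rw [Finset.inter_eq_right]
  intro j hj
  rw [Finset.mem_range]
  have := (Finset.mem_Icc.mp hj).2
  omega

lemma strictMono_cons {k n : ℕ} (x : Fin (n+1)) (f : Fin (k+1) → Fin (n+1)) :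
    StrictMono (Fin.cons x f : Fin (k+2) → Fin (n+1)) ↔ x < f 0 ∧ StrictMono f := by
  rw [Fin.strictMono_iff_lt_succ, Fin.strictMono_iff_lt_succ, Fin.forall_fin_succ]
  constructor
  · rintro ⟨h0, hs⟩
    refine ⟨by simpa using h0, fun i => ?_⟩
    have := hs i
    rwa [← Fin.succ_castSucc, Fin.cons_succ, Fin.cons_succ] at this
  · rintro ⟨h0, hs⟩
    refine ⟨by simpa using h0, fun i => ?_⟩
    rw [← Fin.succ_castSucc, Fin.cons_succ, Fin.cons_succ]
    exact hs i

lemma key (k : ℕ) (e : Fin (k+1) → ℝ) (he : ∀ s, 0 ≤ e s) (a : ℕ → ℝ) (c : ℝ)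
    (ha : Tendsto a atTop (nhds c)) :
    Tendsto (fun n : ℕ => (1/(n:ℝ)) *
      ∑ i ∈ Finset.univ.filter
          (fun i : Fin (k + 1) → Fin (n + 1) => StrictMono i ∧ ∀ s, 1 ≤ (i s : ℕ)),
        a ((i 0 : Fin (n+1)) : ℕ) *
        (∏ s : Fin k,
            ((((i s.castSucc : Fin (n + 1)) : ℕ) : ℝ) / (((i s.succ : Fin (n + 1)) : ℕ) : ℝ))
                ^ (e s.castSucc) *
              (1 / ((((i s.succ : Fin (n + 1)) : ℕ) : ℝ) - 1))) *
        ((((i (Fin.last k) : Fin (n + 1)) : ℕ) : ℝ) / (n : ℝ)) ^ (e (Fin.last k)))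
      atTop (nhds (c * ∏ s : Fin (k+1), 1 / (e s + 1))) := by
  induction k generalizing a c with
  | zero =>
    have hL := weightedL a c ha (e 0) (he 0)
    have hval : c / (e 0 + 1) = c * ∏ s : Fin 1, 1 / (e s + 1) := by
      rw [Fin.prod_univ_one, mul_one_div]
    rw [hval] at hL
    apply hL.congr
    intro n
    congr 1
    have hfs := fin_sum_ite n (n+1) le_rfl (fun j => a j * ((j:ℝ)/(n:ℝ))^(e 0))
    simp only [Nat.add_sub_cancel] at hfs
    rw [Finset.sum_filter,
      ← Equiv.sum_comp (Equiv.funUnique (Fin 1) (Fin (n+1))).symm, ← hfs]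
    refine Fintype.sum_congr _ _ fun x => ?_
    have hmono : StrictMono ((Equiv.funUnique (Fin 1) (Fin (n+1))).symm x) :=
      Subsingleton.strictMono _
    have hlt : ((x:ℕ) < n + 1) := x.isLt
    simp [hmono, hlt, Fin.forall_fin_one, Equiv.funUnique, Fin.last, Subsingleton.strictMono]
  | succ k ih =>
    have ha' : Tendsto (fun m : ℕ => (1/((m:ℝ)-1)) *
        ∑ j ∈ Finset.Icc 1 (m-1), a j * ((j:ℝ)/(m:ℝ))^(e 0)) atTop (nhds (c/(e 0+1))) :=
      weightedL' a c ha (e 0) (he 0)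
    have IH := ih (fun s => e s.succ) (fun s => he s.succ)
      (fun m : ℕ => (1/((m:ℝ)-1)) * ∑ j ∈ Finset.Icc 1 (m-1), a j * ((j:ℝ)/(m:ℝ))^(e 0))
      (c/(e 0 + 1)) ha'
    have hval : c / (e 0 + 1) * ∏ s : Fin (k+1), 1 / (e s.succ + 1)
        = c * ∏ s : Fin (k+2), 1 / (e s + 1) := by
      conv_rhs => rw [Fin.prod_univ_succ]
      ring
    rw [hval] at IH
    apply IH.congr
    intro n
    congr 1
    symm
    rw [Finset.sum_filter, Finset.sum_filter,
      ← Equiv.sum_comp (Fin.consEquiv (fun _ : Fin (k+2) => Fin (n+1))), Fintype.sum_prod_type]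
    rw [Finset.sum_comm]
    refine Fintype.sum_congr _ _ fun f => ?_
    simp only [Fin.consEquiv_apply]
    by_cases hQ : StrictMono f ∧ ∀ s : Fin (k+1), 1 ≤ ((f s : Fin (n+1)) : ℕ)
    · rw [if_pos hQ]
      have hcons_last : ∀ x : Fin (n+1), (Fin.cons x f : Fin (k+2) → Fin (n+1)) (Fin.last (k+1)) = f (Fin.last k) := by
        intro x
        rw [← Fin.succ_last, Fin.cons_succ]
      have hcond : ∀ x : Fin (n+1),
          (StrictMono (Fin.cons x f) ∧
            ∀ s : Fin (k+2), 1 ≤ (((Fin.cons x f : Fin (k+2) → Fin (n+1)) s : Fin (n+1)) : ℕ)) ↔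
          (1 ≤ (x:ℕ) ∧ (x:ℕ) < ((f 0 : Fin (n+1)) : ℕ)) := by
        intro x
        rw [strictMono_cons, Fin.forall_fin_succ]
        simp only [Fin.cons_zero, Fin.cons_succ, Fin.lt_def]
        constructor
        · rintro ⟨⟨h1, _⟩, h2, _⟩; exact ⟨h2, h1⟩
        · rintro ⟨h1, h2⟩; exact ⟨⟨h2, hQ.1⟩, h1, hQ.2⟩
      have hterm : ∀ x : Fin (n+1),
          (a (((Fin.cons x f : Fin (k+2) → Fin (n+1)) (0 : Fin (k+2)) : Fin (n+1)) : ℕ) *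
            ∏ s : Fin (k+1),
              (((((Fin.cons x f : Fin (k+2) → Fin (n+1)) s.castSucc : Fin (n+1)) : ℕ) : ℝ) /
                  ((((Fin.cons x f : Fin (k+2) → Fin (n+1)) s.succ : Fin (n+1)) : ℕ) : ℝ)) ^ e s.castSucc *
                (1 / (((((Fin.cons x f : Fin (k+2) → Fin (n+1)) s.succ : Fin (n+1)) : ℕ) : ℝ) - 1))) *
            (((((Fin.cons x f : Fin (k+2) → Fin (n+1)) (Fin.last (k+1)) : Fin (n+1)) : ℕ) : ℝ) / (n:ℝ)) ^ e (Fin.last (k+1))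
          = (a (x:ℕ) * (((x:ℕ):ℝ) / (((f 0 : Fin (n+1)) : ℕ) : ℝ)) ^ e 0) *
            ((1 / ((((f 0 : Fin (n+1)) : ℕ) : ℝ) - 1)) *
              ((∏ s : Fin k,
                  ((((f s.castSucc : Fin (n+1)) : ℕ) : ℝ) /
                      (((f s.succ : Fin (n+1)) : ℕ) : ℝ)) ^ e s.castSucc.succ *
                    (1 / ((((f s.succ : Fin (n+1)) : ℕ) : ℝ) - 1))) *
                ((((f (Fin.last k) : Fin (n+1)) : ℕ) : ℝ) / (n:ℝ)) ^ e (Fin.last k).succ)) := by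
        intro x
        rw [Fin.prod_univ_succ, hcons_last, ← Fin.succ_last]
        simp only [Fin.cons_zero, Fin.cons_succ, Fin.castSucc_zero, ← Fin.succ_castSucc,
          Fin.cons_succ]
        ring
      have hfs := fin_sum_ite n ((f 0 : Fin (n+1)) : ℕ) (le_of_lt (f 0).isLt)
        (fun j => a j * ((j:ℝ) / (((f 0 : Fin (n+1)) : ℕ) : ℝ)) ^ e 0)
      refine Eq.trans (Fintype.sum_congr _ _ fun x =>
        (if_congr (hcond x) (hterm x) rfl).trans (ite_zero_mul _ _ _).symm) ?_
      rw [← Finset.sum_mul, hfs]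
      ring
    · rw [if_neg hQ]
      refine Finset.sum_eq_zero fun x _ => ?_
      rw [if_neg]
      rintro ⟨hm, h1⟩
      exact hQ ⟨((strictMono_cons x f).mp hm).2,
        fun s => by have := h1 s.succ; rwa [Fin.cons_succ] at this⟩

theorem stmt_17 (k : ℕ) (e : Fin (k + 1) → ℝ) (he : ∀ s, 0 ≤ e s)
    (S : ℕ → ℝ)
    (hS : ∀ n : ℕ, k + 2 ≤ n → S n = (1 / (n : ℝ)) *
      ∑ i ∈ Finset.univ.filter
          (fun i : Fin (k + 1) → Fin (n + 1) => StrictMono i ∧ ∀ s, 1 ≤ (i s : ℕ)),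
        (∏ s : Fin k,
            ((((i s.castSucc : Fin (n + 1)) : ℕ) : ℝ) / (((i s.succ : Fin (n + 1)) : ℕ) : ℝ))
                ^ (e s.castSucc) *
              (1 / ((((i s.succ : Fin (n + 1)) : ℕ) : ℝ) - 1))) *
          ((((i (Fin.last k) : Fin (n + 1)) : ℕ) : ℝ) / (n : ℝ)) ^ (e (Fin.last k))) :
    Filter.Tendsto S Filter.atTop (nhds (∏ s : Fin (k + 1), 1 / (e s + 1))) := by
  have hk := key k e he (fun _ => (1:ℝ)) 1 tendsto_const_nhds
  rw [one_mul] at hk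
  apply hk.congr'
  filter_upwards [eventually_ge_atTop (k+2)] with n hn
  rw [hS n hn]
  congr 1
  exact Finset.sum_congr rfl fun i _ => by rw [one_mul]
end
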